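/- arXiv:2411.00249 — 5 statements merged into one kernel-verified Lean document; each statement's English description precedes it below -/
import Mathlib

section
/- The signed Laplacian matrices of balanced signed graphs with the same underlying graph are isospectral: if A₁ and A₂ are balanced signed adjacency matrices on a finite vertex set V with |A₁ u v| = |A₂ u v| for all u, v, then the signed Laplacians L(A₁) and L(A₂) have equal characteristic polynomials (equivalently, the same multiset of eigenvalues). -/
open Matrix

/-- A signed adjacency matrix: symmetric, zero diagonal, entries in {-1, 0, 1}. -/
def IsSignedAdj {V : Type*} [Fintype V] (A : Matrix V V ℝ) : Prop :=
  A.IsSymm ∧ (∀ v, A v v = 0) ∧ ∀ u v, A u v = -1 ∨ A u v = 0 ∨ A u v = 1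

/-- The degree matrix `D(A)`, with `D(A) v v = ∑ u, |A v u|`. -/
def degMatrix {V : Type*} [Fintype V] [DecidableEq V] (A : Matrix V V ℝ) : Matrix V V ℝ :=
  Matrix.diagonal fun v => ∑ u, |A v u|

/-- The signed Laplacian `L(A) = D(A) - A`. -/
def signedLap {V : Type*} [Fintype V] [DecidableEq V] (A : Matrix V V ℝ) : Matrix V V ℝ :=
  degMatrix A - A

/-- `A` is balanced if some `σ : V → {−1, 1}` satisfies `A u v = σ u * σ v * |A u v|`. -/
def IsBalanced {V : Type*} [Fintype V] (A : Matrix V V ℝ) : Prop :=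
  ∃ σ : V → ℝ, (∀ v, σ v = 1 ∨ σ v = -1) ∧ ∀ u v, A u v = σ u * σ v * |A u v|

/-- Conjugation by an involutory matrix preserves the characteristic polynomial. -/
lemma charpoly_conj_inv {V : Type*} [Fintype V] [DecidableEq V]
    (S M : Matrix V V ℝ) (hS : S * S = 1) :
    (S * M * S).charpoly = M.charpoly := by
  unfold Matrix.charpoly
  have key : charmatrix (S * M * S)
      = S.map Polynomial.C * charmatrix M * S.map Polynomial.C := by
    unfold charmatrix
    have hcomm : Commute (Matrix.scalar V (Polynomial.X : Polynomial ℝ)) (S.map Polynomial.C) :=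
      Matrix.scalar_commute _ (fun r => Commute.all _ r) _
    have h1 : S.map Polynomial.C * (Matrix.scalar V (Polynomial.X : Polynomial ℝ))
        * S.map Polynomial.C = Matrix.scalar V (Polynomial.X : Polynomial ℝ) := by
      rw [← hcomm.eq, mul_assoc, ← Matrix.map_mul, hS, Matrix.map_one _ (map_zero _) (map_one _),
        mul_one]
    rw [mul_sub, sub_mul, h1]
    congr 1
    simp only [RingHom.mapMatrix_apply]
    rw [← Matrix.map_mul, ← Matrix.map_mul]
  rw [key, Matrix.det_mul, Matrix.det_mul]
  have hdet : (S.map Polynomial.C).det * (S.map Polynomial.C).det = 1 := by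
    rw [← Matrix.det_mul, ← Matrix.map_mul, hS, Matrix.map_one _ (map_zero _) (map_one _),
      Matrix.det_one]
  calc (S.map Polynomial.C).det * (charmatrix M).det * (S.map Polynomial.C).det
      = (S.map Polynomial.C).det * (S.map Polynomial.C).det * (charmatrix M).det := by ring
    _ = (charmatrix M).det := by rw [hdet, one_mul]

lemma signedLap_eq_conj {V : Type*} [Fintype V] [DecidableEq V]
    (A : Matrix V V ℝ) (σ : V → ℝ) (hσ : ∀ v, σ v = 1 ∨ σ v = -1)
    (hA : ∀ u v, A u v = σ u * σ v * |A u v|) :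
    signedLap A = Matrix.diagonal σ * signedLap (fun u v => |A u v|) * Matrix.diagonal σ := by
  have hsq : ∀ v, σ v * σ v = 1 := by
    intro v; rcases hσ v with h | h <;> rw [h] <;> ring
  ext u v
  have hrhs : (Matrix.diagonal σ * signedLap (fun u v => |A u v|) * Matrix.diagonal σ) u v
      = σ u * signedLap (fun u v => |A u v|) u v * σ v := by
    rw [Matrix.mul_apply]
    rw [Finset.sum_eq_single v ?h1 ?h2]
    · rw [Matrix.diagonal_apply_eq, Matrix.mul_apply]
      rw [Finset.sum_eq_single u ?h3 ?h4]
      · rw [Matrix.diagonal_apply_eq]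
      case h3 => intro b _ hb; rw [Matrix.diagonal_apply_ne' _ hb]; ring
      case h4 => intro h; exact absurd (Finset.mem_univ u) h
    case h1 => intro b _ hb; rw [Matrix.diagonal_apply_ne _ hb]; ring
    case h2 => intro h; exact absurd (Finset.mem_univ v) h
  rw [hrhs]
  by_cases huv : u = v
  · subst huv
    have hAuu : A u u = |A u u| := by
      nth_rewrite 1 [hA u u]; rw [hsq u, one_mul]
    simp only [signedLap, degMatrix, Matrix.sub_apply, Matrix.diagonal_apply_eq, abs_abs]
    erw [Matrix.sub_apply]; simp only [Matrix.diagonal_apply_eq]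
    rw [mul_comm (σ u), mul_assoc, hsq u, mul_one]
    linarith [hAuu]
  · simp only [signedLap, degMatrix, Matrix.sub_apply, Matrix.diagonal_apply_ne _ huv]
    erw [Matrix.sub_apply]; simp only [Matrix.diagonal_apply_ne _ huv]
    nth_rewrite 1 [hA u v]
    ring

/-- Signed Laplacians of balanced signed graphs with the same underlying graph are
isospectral: their characteristic polynomials coincide. -/
theorem balanced_isospectral {V : Type*} [Fintype V] [DecidableEq V]
    (A₁ A₂ : Matrix V V ℝ) (hA₁ : IsSignedAdj A₁) (hA₂ : IsSignedAdj A₂)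
    (hbal₁ : IsBalanced A₁) (hbal₂ : IsBalanced A₂)
    (hsame : ∀ u v, |A₁ u v| = |A₂ u v|) :
    (signedLap A₁).charpoly = (signedLap A₂).charpoly := by
  obtain ⟨σ₁, hσ₁, h₁⟩ := hbal₁
  obtain ⟨σ₂, hσ₂, h₂⟩ := hbal₂
  have hsq : ∀ (σ : V → ℝ), (∀ v, σ v = 1 ∨ σ v = -1) →
      Matrix.diagonal σ * Matrix.diagonal σ = 1 := by
    intro σ hσ
    rw [Matrix.diagonal_mul_diagonal]
    convert Matrix.diagonal_one
    rcases hσ _ with h | h <;> rw [h] <;> ring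
  have e1 := signedLap_eq_conj A₁ σ₁ hσ₁ h₁
  have e2 := signedLap_eq_conj A₂ σ₂ hσ₂ h₂
  have habs : (fun u v => |A₁ u v|) = (fun u v => |A₂ u v|) := by
    funext u v; exact hsame u v
  rw [e1, e2, charpoly_conj_inv _ _ (hsq σ₁ hσ₁), charpoly_conj_inv _ _ (hsq σ₂ hσ₂), habs]
end

section
/- For a connected balanced signed graph, the kernel of the signed Laplacian is one-dimensional and is spanned by a vector all of whose entries are +1 or −1, and this vector encodes the Harary cut: let A be a balanced signed adjacency matrix on a finite nonempty vertex set V whose underlying graph (u adjacent to v iff A u v ≠ 0) is connected, with balance witness σ : V → {−1, 1}. Then L(A) · σ = 0, and every vector x with L(A) · x = 0 is a scalar multiple of σ; consequently every 0-eigenvector of L(A) has all entries equal to +c or −c for some c ≠ 0, and partitioning V by the sign of the entries puts all positive edges within the parts and all negative edges between the parts. -/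
open Matrix

/-- The underlying simple graph of `A`: `u` adjacent to `v` iff `A u v ≠ 0`. -/
def underlying {V : Type*} (A : Matrix V V ℝ) : SimpleGraph V :=
  SimpleGraph.fromRel fun u v => A u v ≠ 0

/-- For a connected balanced signed graph with balance witness `σ : V → {−1, 1}`:
`L(A) σ = 0`; every kernel vector is a scalar multiple of `σ`; consequently every
nonzero `0`-eigenvector has all entries `+c` or `−c` for some `c ≠ 0`; and partitioning
the vertices by the sign of `σ` puts all positive edges within the parts
and all negative edges between the parts (the Harary cut). -/
theorem balanced_connected_kernel {V : Type*} [Fintype V] [DecidableEq V] [Nonempty V]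
    (A : Matrix V V ℝ) (hA : IsSignedAdj A)
    (hconn : (underlying A).Connected)
    (σ : V → ℝ) (hσ : ∀ v, σ v = 1 ∨ σ v = -1)
    (hbal : ∀ u v, A u v = σ u * σ v * |A u v|) :
    signedLap A *ᵥ σ = 0 ∧
    (∀ x : V → ℝ, signedLap A *ᵥ x = 0 → ∃ c : ℝ, x = c • σ) ∧
    (∀ x : V → ℝ, x ≠ 0 → signedLap A *ᵥ x = 0 →
      ∃ c : ℝ, c ≠ 0 ∧ ∀ v, x v = c ∨ x v = -c) ∧
    (∀ u v, A u v ≠ 0 → ((σ u = σ v → A u v = 1) ∧ (σ u ≠ σ v → A u v = -1))) := by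
  classical
  obtain ⟨hsymm, hdiag, hent⟩ := hA
  have hσ2 : ∀ v, σ v * σ v = 1 := by
    intro v; rcases hσ v with h | h <;> rw [h] <;> norm_num
  have hσne : ∀ v, σ v ≠ 0 := by
    intro v; rcases hσ v with h | h <;> rw [h] <;> norm_num
  have habs : ∀ u v, A u v ≠ 0 → |A u v| = 1 := by
    intro u v h
    rcases hent u v with h1 | h1 | h1 <;> simp [h1] at *
  set G := underlying A with hG
  -- the adjacency matrix of the underlying graph is |A|
  have hadjM : ∀ v u, (G.adjMatrix ℝ) v u = |A v u| := by
    intro v u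
    by_cases h : A v u = 0
    · have h2 : A u v = 0 := by rw [← hsymm.apply u v]; exact h
      have hnadj : ¬ G.Adj v u := by
        simp [hG, underlying, SimpleGraph.fromRel_adj, h, h2]
      simp [hnadj, h]
    · have hne : v ≠ u := by
        intro he; subst he; exact h (hdiag v)
      have hadj : G.Adj v u := by
        simp [hG, underlying, SimpleGraph.fromRel_adj, hne, h]
      simp [hadj, habs v u h]
  -- entrywise relation between lapMatrix and signedLap
  have hentry : ∀ v u, G.lapMatrix ℝ v u = σ v * signedLap A v u * σ u := by
    intro v u
    by_cases h : v = u
    · subst h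
      have hdeg : (G.degree v : ℝ) = ∑ u, |A v u| := by
        rw [show (∑ u, |A v u|) = ∑ u, (G.adjMatrix ℝ) v u from
          Finset.sum_congr rfl fun u _ => (hadjM v u).symm]
        have h1 := SimpleGraph.adjMatrix_mulVec_apply (α := ℝ) (G := G) v (fun _ => (1 : ℝ))
        simp only [Matrix.mulVec, dotProduct, mul_one, Finset.sum_const,
          nsmul_eq_mul] at h1
        rw [h1, SimpleGraph.card_neighborFinset_eq_degree]
      have : G.lapMatrix ℝ v v = (G.degree v : ℝ) := by
        simp [SimpleGraph.lapMatrix, SimpleGraph.degMatrix, Matrix.diagonal]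
      rw [this, hdeg]
      simp only [signedLap, degMatrix, Matrix.sub_apply, Matrix.diagonal_apply_eq, hdiag v]
      linear_combination (-(∑ u, |A v u|)) * hσ2 v
    · have hlap : G.lapMatrix ℝ v u = -(G.adjMatrix ℝ v u) := by
        simp [SimpleGraph.lapMatrix, SimpleGraph.degMatrix, Matrix.diagonal_apply_ne _ h]
      rw [hlap, hadjM v u]
      simp only [signedLap, degMatrix, Matrix.sub_apply, Matrix.diagonal_apply_ne _ h]
      linear_combination (σ v * σ u) * hbal v u + (σ u * σ u * |A v u|) * hσ2 v + |A v u| * hσ2 u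
  -- key pointwise identity
  have key : ∀ (x : V → ℝ) (v : V),
      (G.lapMatrix ℝ *ᵥ (σ * x)) v = σ v * ((signedLap A *ᵥ x) v) := by
    intro x v
    simp only [Matrix.mulVec, dotProduct, Pi.mul_apply]
    rw [Finset.mul_sum]
    refine Finset.sum_congr rfl fun u _ => ?_
    rw [hentry v u]
    linear_combination (σ v * signedLap A v u * x u) * hσ2 u
  -- part 1
  have part1 : signedLap A *ᵥ σ = 0 := by
    have hσσ : (σ * σ) = fun _ : V => (1 : ℝ) := funext fun v => hσ2 v
    have h0 : G.lapMatrix ℝ *ᵥ (σ * σ) = 0 := by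
      rw [hσσ]; exact G.lapMatrix_mulVec_const_eq_zero
    funext v
    have := key σ v
    rw [congrFun h0 v] at this
    have := (mul_eq_zero.mp this.symm).resolve_left (hσne v)
    simpa using this
  -- part 2
  have part2 : ∀ x : V → ℝ, signedLap A *ᵥ x = 0 → ∃ c : ℝ, x = c • σ := by
    intro x hx
    have h0 : G.lapMatrix ℝ *ᵥ (σ * x) = 0 := by
      funext v
      rw [key x v, congrFun hx v]
      simp
    have hreach : ∀ i j, G.Reachable i j → (σ * x) i = (σ * x) j := by
      rw [← G.lapMatrix_mulVec_eq_zero_iff_forall_reachable]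
      exact h0
    obtain v0 := Classical.arbitrary V
    refine ⟨σ v0 * x v0, funext fun v => ?_⟩
    have h := hreach v v0 (hconn v v0)
    simp only [Pi.mul_apply] at h
    simp only [Pi.smul_apply, smul_eq_mul]
    linear_combination σ v * h + (-(x v)) * hσ2 v
  refine ⟨part1, part2, ?_, ?_⟩
  · intro x hx0 hx
    obtain ⟨c, hc⟩ := part2 x hx
    have hcne : c ≠ 0 := by
      intro h; subst h; simp at hc; exact hx0 hc
    refine ⟨c, hcne, fun v => ?_⟩
    rw [hc]
    rcases hσ v with h | h <;> simp [h]
  · intro u v h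
    have habs1 := habs u v h
    have hA1 : A u v = σ u * σ v := by rw [hbal u v, habs1, mul_one]
    constructor
    · intro he
      rw [hA1, he]; exact hσ2 v
    · intro hne
      rcases hσ u with h1 | h1 <;> rcases hσ v with h2 | h2 <;>
        first
          | (exact absurd (h1.trans h2.symm) hne)
          | (rw [hA1, h1, h2]; norm_num)
end

section
/- For a balanced signed graph, the multiplicity of the eigenvalue 0 of the signed Laplacian counts the connected components of the underlying graph: if A is a balanced signed adjacency matrix on a finite vertex set V, then the dimension of the kernel of the signed Laplacian L(A) (as a linear map ℝ^V → ℝ^V) equals the number of connected components of the underlying graph of A. -/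
open Matrix

/-- For a balanced signed graph, the multiplicity of the eigenvalue `0` of the signed
Laplacian (the dimension of its kernel as a linear map `ℝ^V → ℝ^V`) equals the number
of connected components of the underlying graph. -/
theorem balanced_kernel_dim_eq_card_components {V : Type*} [Fintype V] [DecidableEq V]
    (A : Matrix V V ℝ) (hA : IsSignedAdj A) (hbal : IsBalanced A) :
    Module.finrank ℝ (LinearMap.ker (Matrix.toLin' (signedLap A)))
      = Nat.card (underlying A).ConnectedComponent := by
  classical
  obtain ⟨hsymm, hdiag, hent⟩ := hA
  obtain ⟨σ, hσ, hb⟩ := hbal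
  set G := underlying A with hG
  haveI : DecidableRel G.Adj := Classical.decRel _
  have hσ2 : ∀ v, σ v * σ v = 1 := by
    intro v; rcases hσ v with h | h <;> rw [h] <;> norm_num
  have hadj : ∀ u v, G.Adj u v ↔ u ≠ v ∧ A u v ≠ 0 := by
    intro u v
    constructor
    · rintro ⟨hne, h | h⟩
      · exact ⟨hne, h⟩
      · refine ⟨hne, ?_⟩
        have := congrFun (congrFun hsymm.symm u) v
        simp [Matrix.transpose_apply] at this
        rw [this]; exact h
    · rintro ⟨hne, h⟩; exact ⟨hne, Or.inl h⟩
  have habs : ∀ u v, (G.adjMatrix ℝ) u v = |A u v| := by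
    intro u v
    rw [SimpleGraph.adjMatrix_apply]
    by_cases hne : u = v
    · subst hne; simp [hadj, hdiag u]
    · by_cases h : A u v = 0
      · simp [hadj, h]
      · rw [if_pos ((hadj u v).2 ⟨hne, h⟩)]
        rcases hent u v with h1 | h1 | h1 <;> rw [h1] <;> norm_num
        exact absurd h1 h
  have hdeg : ∀ v, (G.degree v : ℝ) = ∑ u, |A v u| := by
    intro v
    rw [SimpleGraph.degree_eq_sum_if_adj]
    exact Finset.sum_congr rfl fun u _ => by
      rw [← habs v u, SimpleGraph.adjMatrix_apply]
  have key : signedLap A = Matrix.diagonal σ * G.lapMatrix ℝ * Matrix.diagonal σ := by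
    ext u v
    rw [Matrix.mul_diagonal, Matrix.diagonal_mul]
    by_cases hne : u = v
    · subst hne
      have hL : (G.lapMatrix ℝ) u u = ∑ w, |A u w| := by
        simp [SimpleGraph.lapMatrix, SimpleGraph.degMatrix, Matrix.sub_apply,
          Matrix.diagonal_apply_eq, hdeg u]
      have hR : signedLap A u u = ∑ w, |A u w| := by
        simp [signedLap, degMatrix, Matrix.sub_apply, Matrix.diagonal_apply_eq, hdiag u]
      rw [hL, hR, show σ u * (∑ w, |A u w|) * σ u = (σ u * σ u) * ∑ w, |A u w| from by ring,
        hσ2, one_mul]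
    · have hL : (G.lapMatrix ℝ) u v = -|A u v| := by
        have h0 : (G.lapMatrix ℝ) u v = (G.degMatrix ℝ) u v - (G.adjMatrix ℝ) u v := rfl
        rw [h0, habs u v, SimpleGraph.degMatrix, Matrix.diagonal_apply_ne _ hne, zero_sub]
      have hR : signedLap A u v = -A u v := by
        simp [signedLap, degMatrix, Matrix.sub_apply, Matrix.diagonal_apply_ne _ hne]
      rw [hL, hR]; nth_rewrite 1 [hb u v]; ring
  have hSS : Matrix.diagonal σ * Matrix.diagonal σ = (1 : Matrix V V ℝ) := by
    rw [Matrix.diagonal_mul_diagonal]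
    rw [show (1 : Matrix V V ℝ) = Matrix.diagonal (fun _ => (1 : ℝ)) from (Matrix.diagonal_one).symm]
    exact congrArg _ (funext hσ2)
  have hid : Matrix.toLin' (Matrix.diagonal σ) ∘ₗ Matrix.toLin' (Matrix.diagonal σ)
      = LinearMap.id := by
    rw [← Matrix.toLin'_mul, hSS, Matrix.toLin'_one]
  let e : (V → ℝ) ≃ₗ[ℝ] (V → ℝ) :=
    LinearEquiv.ofLinear (Matrix.toLin' (Matrix.diagonal σ)) (Matrix.toLin' (Matrix.diagonal σ))
      hid hid
  have hcard := G.card_connectedComponent_eq_finrank_ker_toLin'_lapMatrix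
  rw [key]
  have h1 : LinearMap.ker (Matrix.toLin' (Matrix.diagonal σ * G.lapMatrix ℝ * Matrix.diagonal σ))
      = Submodule.map (e.symm : (V → ℝ) →ₗ[ℝ] (V → ℝ))
          (LinearMap.ker (Matrix.toLin' (G.lapMatrix ℝ))) := by
    rw [Matrix.toLin'_mul, Matrix.toLin'_mul, LinearMap.comp_assoc]
    rw [show Matrix.toLin' (Matrix.diagonal σ) = (e : (V → ℝ) →ₗ[ℝ] (V → ℝ)) from rfl]
    rw [LinearEquiv.ker_comp, LinearMap.ker_comp, Submodule.comap_equiv_eq_map_symm]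
  rw [h1, LinearEquiv.finrank_map_eq, ← hcard, Nat.card_eq_fintype_card]
end

section
/- A connected unbalanced signed graph has no zero eigenvalue: let A be a signed adjacency matrix on a finite vertex set V whose underlying graph is connected. If there exists a nonzero vector x : V → ℝ with L(A) · x = 0, then A is balanced (and moreover all entries of x have the same nonzero absolute value, with σ v = x v / |x v| a balance witness). Equivalently, if A is connected and unbalanced, then 0 is not an eigenvalue of the signed Laplacian L(A). -/
open Matrix

/-- A connected unbalanced signed graph has no zero eigenvalue: if the underlying graph
of `A` is connected and the signed Laplacian has a nonzero kernel vector `x`, then `A`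
is balanced; moreover all entries of `x` have the same nonzero absolute value and
`σ v = x v / |x v|` is a balance witness. -/
theorem connected_kernel_imp_balanced {V : Type*} [Fintype V] [DecidableEq V]
    (A : Matrix V V ℝ) (hA : IsSignedAdj A)
    (hconn : (underlying A).Connected)
    (x : V → ℝ) (hx : x ≠ 0) (hker : signedLap A *ᵥ x = 0) :
    IsBalanced A ∧
    (∀ v, x v ≠ 0) ∧
    (∀ u v, |x u| = |x v|) ∧
    (∀ v, x v / |x v| = 1 ∨ x v / |x v| = -1) ∧
    (∀ u v, A u v = (x u / |x u|) * (x v / |x v|) * |A u v|) := by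
  obtain ⟨hsym, hdiag, hent⟩ := hA
  have hsym' : ∀ u v, A u v = A v u := fun u v => hsym.apply v u
  -- row equations
  have hrow : ∀ v, (∑ u, |A v u|) * x v = ∑ u, A v u * x u := by
    intro v
    have h := congrFun hker v
    simp only [signedLap, degMatrix, Matrix.mulVec, dotProduct, Pi.zero_apply,
      Matrix.sub_apply, Matrix.diagonal_apply, sub_mul, Finset.sum_sub_distrib, ite_mul,
      zero_mul, Finset.sum_ite_eq, Finset.mem_univ, if_pos] at h
    linarith
  have hterm : ∀ v u, |A v u| * (x v - A v u * x u)^2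
      = |A v u| * x v ^ 2 + |A v u| * x u ^ 2 - 2 * (A v u * x u * x v) := by
    intro v u
    rcases hent v u with h | h | h <;> rw [h] <;> norm_num <;> ring
  have key : ∀ v, ∑ u, |A v u| * x v ^ 2 = ∑ u, A v u * x u * x v := by
    intro v
    rw [← Finset.sum_mul]
    have : (∑ u, |A v u|) * x v ^ 2 = ((∑ u, |A v u|) * x v) * x v := by ring
    rw [this, hrow v, Finset.sum_mul]
  have hS : ∑ v, ∑ u, |A v u| * (x v - A v u * x u)^2 = 0 := by
    have e1 : ∑ v, ∑ u, |A v u| * (x v - A v u * x u)^2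
        = ∑ v, ((∑ u, |A v u| * x v ^ 2) + (∑ u, |A v u| * x u ^ 2)
            - 2 * ∑ u, A v u * x u * x v) := by
      refine Finset.sum_congr rfl fun v _ => ?_
      rw [Finset.mul_sum, ← Finset.sum_add_distrib, ← Finset.sum_sub_distrib]
      exact Finset.sum_congr rfl fun u _ => hterm v u
    have e2 : ∑ v, ∑ u, |A v u| * x u ^ 2 = ∑ v, ∑ u, |A v u| * x v ^ 2 := by
      rw [Finset.sum_comm]
      exact Finset.sum_congr rfl fun v _ => Finset.sum_congr rfl fun u _ => by
        rw [hsym' u v]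
    rw [e1, Finset.sum_sub_distrib, Finset.sum_add_distrib, e2]
    simp only [key]
    rw [← Finset.mul_sum]
    ring
  have hzero : ∀ v u, |A v u| * (x v - A v u * x u)^2 = 0 := by
    intro v u
    have hnn : ∀ v u : V, 0 ≤ |A v u| * (x v - A v u * x u)^2 :=
      fun v u => mul_nonneg (abs_nonneg _) (sq_nonneg _)
    have h1 := (Finset.sum_eq_zero_iff_of_nonneg (fun v _ =>
      Finset.sum_nonneg fun u _ => hnn v u)).mp hS v (Finset.mem_univ v)
    exact (Finset.sum_eq_zero_iff_of_nonneg (fun u _ => hnn v u)).mp h1 u (Finset.mem_univ u)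
  -- edge relation
  have hedge : ∀ u v, A u v ≠ 0 → x u = A u v * x v := by
    intro u v h
    have h1 : |A u v| ≠ 0 := fun hc => h (abs_eq_zero.mp hc)
    have h2 := hzero u v
    have h3 : (x u - A u v * x v)^2 = 0 := by
      rcases mul_eq_zero.mp h2 with h' | h'
      · exact absurd h' h1
      · exact h'
    have := pow_eq_zero_iff (n := 2) (by norm_num) |>.mp h3
    linarith
  have habs1 : ∀ u v, A u v ≠ 0 → |A u v| = 1 := by
    intro u v h
    rcases hent u v with h' | h' | h' <;> rw [h'] <;> norm_num
    exact h h'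
  have hadjabs : ∀ a b, (underlying A).Adj a b → |x a| = |x b| := by
    intro a b hab
    obtain ⟨hne, h | h⟩ := hab
    · rw [hedge a b h, abs_mul, habs1 a b h, one_mul]
    · rw [hsym' b a] at h
      rw [hedge a b h, abs_mul, habs1 a b h, one_mul]
  have habseq : ∀ u v, |x u| = |x v| := by
    have walk : ∀ {u v : V}, (underlying A).Walk u v → |x u| = |x v| := by
      intro u v w
      induction w with
      | nil => rfl
      | cons h _ ih => exact (hadjabs _ _ h).trans ih
    intro u v
    obtain ⟨w⟩ := hconn u v
    exact walk w
  obtain ⟨v0, hv0'⟩ := Function.ne_iff.mp hx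
  have hv0 : x v0 ≠ 0 := by simpa using hv0'
  have hxne : ∀ v, x v ≠ 0 := by
    intro v hc
    apply hv0
    have := habseq v0 v
    rw [hc, abs_zero, abs_eq_zero] at this
    simpa using this
  have hsigma : ∀ v, x v / |x v| = 1 ∨ x v / |x v| = -1 := by
    intro v
    rcases (hxne v).lt_or_gt with h | h
    · right; rw [abs_of_neg h, div_neg, div_self (hxne v)]
    · left; rw [abs_of_pos h, div_self (hxne v)]
  have hbal : ∀ u v, A u v = (x u / |x u|) * (x v / |x v|) * |A u v| := by
    intro u v
    by_cases h : A u v = 0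
    · rw [h]; simp
    · have h1 := hedge u v h
      have h2 := habseq u v
      have h3 := habs1 u v h
      have h4 : |x v| ≠ 0 := abs_ne_zero.mpr (hxne v)
      rw [h3, mul_one, h2, h1]
      rw [div_mul_div_comm, abs_mul_abs_self]
      rw [mul_assoc, mul_div_assoc, div_self (mul_ne_zero (hxne v) (hxne v)), mul_one]
  exact ⟨⟨fun v => x v / |x v|, hsigma, hbal⟩, hxne, habseq, hsigma, hbal⟩
end

section
/- Harary's bipartition characterization of balance: a signed adjacency matrix A on a finite vertex set V is balanced (there exists σ : V → {−1, 1} with A u v = σ u · σ v · |A u v| for all u, v) if and only if every closed walk in the underlying graph of A has positive sign, i.e. for every sequence of vertices v₀, v₁, …, v_k with v_k = v₀ and A v_i v_{i+1} ≠ 0 for all i < k, the product ∏_{i<k} A v_i v_{i+1} equals +1. -/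
open Matrix Finset

/-- The sign of a walk: the product of the matrix entries along its edges. -/
def wsign {V : Type*} (A : Matrix V V ℝ) {G : SimpleGraph V} :
    ∀ {a b : V}, G.Walk a b → ℝ
  | _, _, SimpleGraph.Walk.nil => 1
  | a, _, SimpleGraph.Walk.cons (v := c) _ p => A a c * wsign A p

@[simp] lemma wsign_nil {V : Type*} (A : Matrix V V ℝ) {G : SimpleGraph V} {a : V} :
    wsign A (SimpleGraph.Walk.nil : G.Walk a a) = 1 := rfl

@[simp] lemma wsign_cons {V : Type*} (A : Matrix V V ℝ) {G : SimpleGraph V} {a b c : V}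
    (h : G.Adj a b) (p : G.Walk b c) :
    wsign A (SimpleGraph.Walk.cons h p) = A a b * wsign A p := rfl

lemma wsign_copy {V : Type*} (A : Matrix V V ℝ) {G : SimpleGraph V} {a b a' b' : V}
    (p : G.Walk a b) (ha : a = a') (hb : b = b') :
    wsign A (p.copy ha hb) = wsign A p := by
  subst ha; subst hb; rw [SimpleGraph.Walk.copy_rfl_rfl]

lemma wsign_append {V : Type*} (A : Matrix V V ℝ) {G : SimpleGraph V} {a b c : V}
    (p : G.Walk a b) (q : G.Walk b c) :
    wsign A (p.append q) = wsign A p * wsign A q := by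
  induction p with
  | nil => simp
  | cons h p ih => simp [SimpleGraph.Walk.cons_append, ih, mul_assoc]

lemma wsign_reverse {V : Type*} {A : Matrix V V ℝ} (hsymm : A.IsSymm)
    {G : SimpleGraph V} {a b : V} (p : G.Walk a b) :
    wsign A p.reverse = wsign A p := by
  induction p with
  | nil => simp
  | cons h p ih =>
    rename_i u v w
    have hs : A v u = A u v := hsymm.apply u v
    simp [SimpleGraph.Walk.reverse_cons, wsign_append, ih, hs, mul_comm]

lemma wsign_pm {V : Type*} {A : Matrix V V ℝ} {G : SimpleGraph V}
    (hG : ∀ u v, G.Adj u v → A u v = 1 ∨ A u v = -1)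
    {a b : V} (p : G.Walk a b) : wsign A p = 1 ∨ wsign A p = -1 := by
  induction p with
  | nil => left; rfl
  | cons h p ih =>
    rcases hG _ _ h with h1 | h1 <;> rcases ih with h2 | h2 <;>
      simp [wsign_cons, h1, h2]

lemma wsign_eq_prod {V : Type*} (A : Matrix V V ℝ) {G : SimpleGraph V} {a b : V}
    (p : G.Walk a b) :
    wsign A p = ∏ i ∈ Finset.range p.length, A (p.getVert i) (p.getVert (i + 1)) := by
  induction p with
  | nil => simp
  | cons h p ih =>
    rw [wsign_cons, SimpleGraph.Walk.length_cons, Finset.prod_range_succ']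
    simp only [SimpleGraph.Walk.getVert_cons_succ, SimpleGraph.Walk.getVert_zero]
    rw [ih, mul_comm]

/-- Harary's characterization of balance: `A` is balanced if and only if every closed
walk in the underlying graph of `A` has sign `+1`. -/
theorem isBalanced_iff_closedWalks_positive {V : Type*} [Fintype V]
    (A : Matrix V V ℝ) (hA : IsSignedAdj A) :
    IsBalanced A ↔
      ∀ (k : ℕ) (v : ℕ → V), v k = v 0 → (∀ i < k, A (v i) (v (i + 1)) ≠ 0) →
        ∏ i ∈ Finset.range k, A (v i) (v (i + 1)) = 1 := by
  classical
  obtain ⟨hsymm, hdiag, hent⟩ := hA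
  constructor
  · rintro ⟨σ, hσ, hσA⟩ k v hvk hnz
    have hsq : ∀ w : V, σ w * σ w = 1 := by
      intro w; rcases hσ w with h | h <;> rw [h] <;> norm_num
    have key : ∀ m : ℕ, (∀ i < m, A (v i) (v (i + 1)) ≠ 0) →
        ∏ i ∈ Finset.range m, A (v i) (v (i + 1)) = σ (v 0) * σ (v m) := by
      intro m
      induction m with
      | zero => intro _; simpa using (hsq (v 0)).symm
      | succ n ih =>
        intro hnz
        rw [Finset.prod_range_succ, ih (fun i hi => hnz i (Nat.lt_succ_of_lt hi))]
        have h1 := hσA (v n) (v (n + 1))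
        have h2 : |A (v n) (v (n + 1))| = 1 := by
          rcases hent (v n) (v (n + 1)) with h | h | h
          · rw [h]; norm_num
          · exact absurd h (hnz n (Nat.lt_succ_self n))
          · rw [h]; norm_num
        rw [h1, h2, mul_one]
        have : σ (v 0) * σ (v n) * (σ (v n) * σ (v (n + 1))) =
            σ (v 0) * (σ (v n) * σ (v n)) * σ (v (n + 1)) := by ring
        rw [this, hsq, mul_one]
    rw [key k hnz, hvk, hsq]
  · intro hpos
    set G : SimpleGraph V :=
      { Adj := fun u v => A u v ≠ 0,
        symm := by
          constructor
          intro u v h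
          rwa [show A v u = A u v from hsymm.apply u v]
        loopless := ⟨fun v h => h (hdiag v)⟩ } with hG
    have hGpm : ∀ u v, G.Adj u v → A u v = 1 ∨ A u v = -1 := by
      intro u v h
      rcases hent u v with h1 | h1 | h1
      · right; exact h1
      · exact absurd h1 h
      · left; exact h1
    have hreach : ∀ v : V, G.Reachable ((G.connectedComponentMk v).out) v := by
      intro v
      exact (SimpleGraph.ConnectedComponent.eq.mp
        ((G.connectedComponentMk v).out_eq))
    refine ⟨fun v => wsign A (hreach v).some, fun v => wsign_pm hGpm _, ?_⟩
    intro u v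
    show A u v = wsign A (hreach u).some * wsign A (hreach v).some * |A u v|
    by_cases hzero : A u v = 0
    · rw [hzero, abs_zero, mul_zero]
    · have hadj : G.Adj u v := hzero
      have hcomp : (G.connectedComponentMk u).out = (G.connectedComponentMk v).out := by
        rw [SimpleGraph.ConnectedComponent.sound hadj.reachable]
      set p : G.Walk _ u := (hreach u).some with hp
      set q0 : G.Walk _ v := (hreach v).some with hq0
      let q : G.Walk (G.connectedComponentMk u).out v := q0.copy hcomp.symm rfl
      let w : G.Walk (G.connectedComponentMk u).out (G.connectedComponentMk u).out :=
        p.append (SimpleGraph.Walk.cons hadj q.reverse)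
      have hw1 : wsign A w = 1 := by
        rw [wsign_eq_prod]
        apply hpos
        · rw [SimpleGraph.Walk.getVert_length, SimpleGraph.Walk.getVert_zero]
        · intro i hi
          exact (w.adj_getVert_succ hi)
      have hws : wsign A w = wsign A p * (A u v * wsign A q) := by
        rw [wsign_append, wsign_cons, wsign_reverse hsymm]
      have hq : wsign A q = wsign A q0 := wsign_copy A q0 hcomp.symm rfl
      rw [hws, hq] at hw1
      have habs : |A u v| = 1 := by
        rcases hGpm u v hadj with h | h <;> rw [h] <;> norm_num
      rw [habs, mul_one]
      rcases wsign_pm hGpm p with h1 | h1 <;> rcases wsign_pm hGpm q0 with h2 | h2 <;>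
        rw [show wsign A (hreach u).some = wsign A p from rfl,
          show wsign A (hreach v).some = wsign A q0 from rfl, h1, h2] at hw1 ⊢ <;> linarith
end
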